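/- Let Q be an s×t (0,1)-matrix whose first row, last row, first column, and last column each contain at least one 1-entry, and let m ≥ 2s, n ≥ 2t. Then m(m,n,Q) = mn − (|NW(Q)| + |SW(Q)| + |NE(Q)| + |SE(Q)|). -/

import Mathlib

open Finset

/-- Number of 1-entries of a (0,1)-matrix. -/
def onesCount {m n : ℕ} (A : Fin m → Fin n → Bool) : ℕ :=
  (Finset.univ.filter (fun p : Fin m × Fin n => A p.1 p.2 = true)).card

/-- Number of 0-entries of a (0,1)-matrix. -/
def zerosCount {m n : ℕ} (A : Fin m → Fin n → Bool) : ℕ :=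
  (Finset.univ.filter (fun p : Fin m × Fin n => A p.1 p.2 = false)).card

/-- `A` is `Q`-forcing: every s×t submatrix of `A` is entrywise ≥ Q. -/
def IsForcing {m n s t : ℕ} (A : Fin m → Fin n → Bool) (Q : Fin s → Fin t → Bool) : Prop :=
  ∀ (r : Fin s → Fin m) (c : Fin t → Fin n), StrictMono r → StrictMono c →
    ∀ y x, Q y x = true → A (r y) (c x) = true

/-- Minimum number of 1-entries of an m×n Q-forcing matrix. -/
noncomputable def mMin (m n : ℕ) {s t : ℕ} (Q : Fin s → Fin t → Bool) : ℕ :=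
  sInf {v | ∃ A : Fin m → Fin n → Bool, IsForcing A Q ∧ onesCount A = v}

/-- `A` is strongly `Q`-forcing: every 1-entry lies in a submatrix exactly equal to `Q`. -/
def IsStronglyForcing {m n s t : ℕ} (A : Fin m → Fin n → Bool)
    (Q : Fin s → Fin t → Bool) : Prop :=
  ∀ i j, A i j = true → ∃ (r : Fin s → Fin m) (c : Fin t → Fin n),
    StrictMono r ∧ StrictMono c ∧ (∀ y x, A (r y) (c x) = Q y x) ∧
    ∃ y x, r y = i ∧ c x = j

/-- Maximum number of 1-entries of an m×n strongly Q-forcing matrix. -/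
noncomputable def MMax (m n : ℕ) {s t : ℕ} (Q : Fin s → Fin t → Bool) : ℕ :=
  sSup {v | ∃ A : Fin m → Fin n → Bool, IsStronglyForcing A Q ∧ onesCount A = v}

/-- Corner sets of 0-positions with no 1-entry weakly in the given quadrant direction. -/
def cornerNW {s t : ℕ} (Q : Fin s → Fin t → Bool) : Finset (Fin s × Fin t) :=
  Finset.univ.filter (fun p => ∀ i' j', i' ≤ p.1 → j' ≤ p.2 → Q i' j' = false)

def cornerNE {s t : ℕ} (Q : Fin s → Fin t → Bool) : Finset (Fin s × Fin t) :=
  Finset.univ.filter (fun p => ∀ i' j', i' ≤ p.1 → p.2 ≤ j' → Q i' j' = false)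

def cornerSW {s t : ℕ} (Q : Fin s → Fin t → Bool) : Finset (Fin s × Fin t) :=
  Finset.univ.filter (fun p => ∀ i' j', p.1 ≤ i' → j' ≤ p.2 → Q i' j' = false)

def cornerSE {s t : ℕ} (Q : Fin s → Fin t → Bool) : Finset (Fin s × Fin t) :=
  Finset.univ.filter (fun p => ∀ i' j', p.1 ≤ i' → p.2 ≤ j' → Q i' j' = false)

/-- `P` is a permutation matrix. -/
def IsPermMatrix {k : ℕ} (P : Fin k → Fin k → Bool) : Prop :=
  ∃ σ : Equiv.Perm (Fin k), ∀ i j, P i j = decide (σ i = j)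


lemma sm_le {s m : ℕ} {r : Fin s → Fin m} (h : StrictMono r) (y : Fin s) :
    (y : ℕ) ≤ (r y : ℕ) := by
  have H : ∀ k, ∀ y : Fin s, (y : ℕ) = k → k ≤ (r y : ℕ) := by
    intro k
    induction k with
    | zero => intro y _; exact Nat.zero_le _
    | succ k ih =>
      intro y hy
      have hk : k < s := by have := y.isLt; omega
      have h1 : (⟨k, hk⟩ : Fin s) < y := by
        simp [Fin.lt_def]; omega
      have h4 : (r ⟨k, hk⟩ : ℕ) < (r y : ℕ) := h h1
      have h3 := ih ⟨k, hk⟩ rfl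
      omega
  exact H _ y rfl

lemma sm_ub {s m : ℕ} {r : Fin s → Fin m} (h : StrictMono r) (y : Fin s) :
    (r y : ℕ) ≤ m - s + y := by
  have hr' : StrictMono (fun z : Fin s => (r z.rev).rev) := by
    intro a b hab
    exact Fin.rev_lt_rev.mpr (h (Fin.rev_lt_rev.mpr hab))
  have h1 := sm_le hr' y.rev
  simp only [Fin.rev_rev] at h1
  rw [Fin.val_rev, Fin.val_rev] at h1
  have := y.isLt; have := (r y).isLt
  omega

lemma exists_sm {s m : ℕ} (hsm : s ≤ m) (y : Fin s) (i : Fin m)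
    (h1 : (y : ℕ) ≤ i) (h2 : (i : ℕ) ≤ m - s + y) :
    ∃ r : Fin s → Fin m, StrictMono r ∧ r y = i := by
  have hb : ∀ z : Fin s, (i : ℕ) - y + z < m := by
    intro z; have := z.isLt; have := y.isLt; have := i.isLt; omega
  refine ⟨fun z => ⟨(i : ℕ) - y + z, hb z⟩, fun a b hab => ?_, ?_⟩
  · have : (a : ℕ) < b := hab
    simp only [Fin.mk_lt_mk]; omega
  · exact Fin.ext (by show (i : ℕ) - y + y = i; omega)
lemma forcing_zero {m n s t : ℕ} (hsm : s ≤ m) (htn : t ≤ n)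
    {Q : Fin s → Fin t → Bool} {A : Fin m → Fin n → Bool} (hA : IsForcing A Q)
    {i : Fin m} {j : Fin n} (h0 : A i j = false)
    (y : Fin s) (x : Fin t) (hQ : Q y x = true)
    (h1 : (y : ℕ) ≤ i) (h2 : (i : ℕ) ≤ m - s + y)
    (h3 : (x : ℕ) ≤ j) (h4 : (j : ℕ) ≤ n - t + x) : False := by
  obtain ⟨r, hr, hry⟩ := exists_sm hsm y i h1 h2
  obtain ⟨c, hc, hcx⟩ := exists_sm htn x j h3 h4
  have h5 := hA r c hr hc y x hQ
  rw [hry, hcx, h0] at h5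
  exact Bool.false_ne_true h5

def buildA (m n s t : ℕ) (Q : Fin s → Fin t → Bool) : Fin m → Fin n → Bool :=
  fun i j =>
    !(decide ((i : ℕ) < s ∧ (j : ℕ) < t ∧
        ∀ (i' : Fin s) (j' : Fin t), (i' : ℕ) ≤ (i : ℕ) → (j' : ℕ) ≤ (j : ℕ) → Q i' j' = false) ||
      decide ((i : ℕ) < s ∧ n - t ≤ (j : ℕ) ∧
        ∀ (i' : Fin s) (j' : Fin t), (i' : ℕ) ≤ (i : ℕ) → (j : ℕ) ≤ n - t + (j' : ℕ) → Q i' j' = false) ||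
      decide (m - s ≤ (i : ℕ) ∧ (j : ℕ) < t ∧
        ∀ (i' : Fin s) (j' : Fin t), (i : ℕ) ≤ m - s + (i' : ℕ) → (j' : ℕ) ≤ (j : ℕ) → Q i' j' = false) ||
      decide (m - s ≤ (i : ℕ) ∧ n - t ≤ (j : ℕ) ∧
        ∀ (i' : Fin s) (j' : Fin t), (i : ℕ) ≤ m - s + (i' : ℕ) → (j : ℕ) ≤ n - t + (j' : ℕ) → Q i' j' = false))

lemma buildA_forcing (m n s t : ℕ) (Q : Fin s → Fin t → Bool) :
    IsForcing (buildA m n s t Q) Q := by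
  intro r c hr hc y x hQ
  by_contra hcon
  have h0 : buildA m n s t Q (r y) (c x) = false := by
    cases hb : buildA m n s t Q (r y) (c x) with
    | false => rfl
    | true => exact absurd hb hcon
  simp only [buildA, Bool.not_eq_false', Bool.or_eq_true, decide_eq_true_eq] at h0
  rcases h0 with ((⟨_, _, hd⟩ | ⟨_, _, hd⟩) | ⟨_, _, hd⟩) | ⟨_, _, hd⟩
  · exact absurd (hd y x (sm_le hr y) (sm_le hc x)) (by simp [hQ])
  · exact absurd (hd y x (sm_le hr y) (sm_ub hc x)) (by simp [hQ])
  · exact absurd (hd y x (sm_ub hr y) (sm_le hc x)) (by simp [hQ])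
  · exact absurd (hd y x (sm_ub hr y) (sm_ub hc x)) (by simp [hQ])

lemma ones_add_zeros {m n : ℕ} (A : Fin m → Fin n → Bool) :
    onesCount A + zerosCount A = m * n := by
  have h := Finset.card_filter_add_card_filter_not
    (s := (univ : Finset (Fin m × Fin n))) (p := fun p => A p.1 p.2 = true)
  have h1 : (univ.filter (fun p : Fin m × Fin n => ¬ A p.1 p.2 = true))
      = univ.filter (fun p => A p.1 p.2 = false) := by
    simp [Bool.not_eq_true]
  rw [h1] at h
  unfold onesCount zerosCount
  rw [h, card_univ]
  simp

lemma buildA_zeros (m n s t : ℕ) (hm : 2 * s ≤ m) (hn : 2 * t ≤ n)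
    (Q : Fin s → Fin t → Bool) :
    zerosCount (buildA m n s t Q) =
      (cornerNW Q).card + (cornerSW Q).card + (cornerNE Q).card + (cornerSE Q).card := by
  classical
  have hsm : s ≤ m := by omega
  have htn : t ≤ n := by omega
  set F1 : Finset (Fin m × Fin n) := univ.filter (fun p => (p.1 : ℕ) < s ∧ (p.2 : ℕ) < t ∧
      ∀ (i' : Fin s) (j' : Fin t), (i' : ℕ) ≤ (p.1 : ℕ) → (j' : ℕ) ≤ (p.2 : ℕ) → Q i' j' = false) with hF1
  set F2 : Finset (Fin m × Fin n) := univ.filter (fun p => (p.1 : ℕ) < s ∧ n - t ≤ (p.2 : ℕ) ∧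
      ∀ (i' : Fin s) (j' : Fin t), (i' : ℕ) ≤ (p.1 : ℕ) → (p.2 : ℕ) ≤ n - t + (j' : ℕ) → Q i' j' = false) with hF2
  set F3 : Finset (Fin m × Fin n) := univ.filter (fun p => m - s ≤ (p.1 : ℕ) ∧ (p.2 : ℕ) < t ∧
      ∀ (i' : Fin s) (j' : Fin t), (p.1 : ℕ) ≤ m - s + (i' : ℕ) → (j' : ℕ) ≤ (p.2 : ℕ) → Q i' j' = false) with hF3
  set F4 : Finset (Fin m × Fin n) := univ.filter (fun p => m - s ≤ (p.1 : ℕ) ∧ n - t ≤ (p.2 : ℕ) ∧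
      ∀ (i' : Fin s) (j' : Fin t), (p.1 : ℕ) ≤ m - s + (i' : ℕ) → (p.2 : ℕ) ≤ n - t + (j' : ℕ) → Q i' j' = false) with hF4
  have hZ : (univ.filter (fun p : Fin m × Fin n => buildA m n s t Q p.1 p.2 = false))
      = ((F1 ∪ F2) ∪ F3) ∪ F4 := by
    ext p
    simp only [hF1, hF2, hF3, hF4, mem_union, mem_filter, mem_univ, true_and,
      buildA, Bool.not_eq_false', Bool.or_eq_true, decide_eq_true_eq]
  have d12 : Disjoint F1 F2 := by
    rw [Finset.disjoint_left]
    intro p h1 h2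
    simp only [hF1, hF2, mem_filter] at h1 h2
    have := p.2.isLt; omega
  have d3 : Disjoint (F1 ∪ F2) F3 := by
    rw [Finset.disjoint_left]
    intro p h1 h3
    simp only [hF1, hF2, hF3, mem_union, mem_filter] at h1 h3
    have := p.1.isLt; have := p.2.isLt
    rcases h1 with h1 | h1 <;> omega
  have d4 : Disjoint ((F1 ∪ F2) ∪ F3) F4 := by
    rw [Finset.disjoint_left]
    intro p h1 h4
    simp only [hF1, hF2, hF3, hF4, mem_union, mem_filter] at h1 h4
    have := p.1.isLt; have := p.2.isLt
    rcases h1 with (h1 | h1) | h1 <;> omega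
  have e1 : F1.card = (cornerNW Q).card := by
    refine Finset.card_bij' (i := fun p hp => ((⟨p.1, (by simp only [hF1, mem_filter] at hp; exact hp.2.1)⟩ : Fin s),
        (⟨p.2, (by simp only [hF1, mem_filter] at hp; exact hp.2.2.1)⟩ : Fin t)))
      (j := fun q _ => ((⟨q.1, lt_of_lt_of_le q.1.isLt hsm⟩ : Fin m), (⟨q.2, lt_of_lt_of_le q.2.isLt htn⟩ : Fin n)))
      ?_ ?_ ?_ ?_
    · intro p hp
      simp only [hF1, mem_filter] at hp
      simp only [cornerNW, mem_filter, mem_univ, true_and]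
      intro i' j' h1 h2
      exact hp.2.2.2 i' j' h1 h2
    · intro q hq
      simp only [cornerNW, mem_filter, mem_univ, true_and] at hq
      simp only [hF1, mem_filter, mem_univ, true_and]
      refine ⟨q.1.isLt, q.2.isLt, ?_⟩
      intro i' j' h1 h2
      exact hq i' j' h1 h2
    · intro p hp; rfl
    · intro q hq; rfl
  have e2 : F2.card = (cornerNE Q).card := by
    refine Finset.card_bij' (i := fun p hp => ((⟨p.1, (by simp only [hF2, mem_filter] at hp; exact hp.2.1)⟩ : Fin s),
        (⟨(p.2 : ℕ) - (n - t), (by simp only [hF2, mem_filter] at hp; have := p.2.isLt; omega)⟩ : Fin t)))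
      (j := fun q _ => ((⟨q.1, lt_of_lt_of_le q.1.isLt hsm⟩ : Fin m),
        (⟨(q.2 : ℕ) + (n - t), (by have := q.2.isLt; omega)⟩ : Fin n)))
      ?_ ?_ ?_ ?_
    · intro p hp
      simp only [hF2, mem_filter] at hp
      simp only [cornerNE, mem_filter, mem_univ, true_and]
      intro i' j' h1 h2
      have h2' : (p.2 : ℕ) - (n - t) ≤ (j' : ℕ) := h2
      exact hp.2.2.2 i' j' h1 (by omega)
    · intro q hq
      simp only [cornerNE, mem_filter, mem_univ, true_and] at hq
      simp only [hF2, mem_filter, mem_univ, true_and]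
      refine ⟨q.1.isLt, by omega, ?_⟩
      intro i' j' h1 h2
      exact hq i' j' h1 (by have := q.2.isLt; omega)
    · intro p hp
      simp only [hF2, mem_filter] at hp
      exact Prod.ext (Fin.ext rfl) (Fin.ext (by show (p.2 : ℕ) - (n - t) + (n - t) = (p.2 : ℕ); have := hp.2.2.1; omega))
    · intro q hq
      exact Prod.ext (Fin.ext rfl) (Fin.ext (by show (q.2 : ℕ) + (n - t) - (n - t) = (q.2 : ℕ); omega))
  have e3 : F3.card = (cornerSW Q).card := by
    refine Finset.card_bij' (i := fun p hp => ((⟨(p.1 : ℕ) - (m - s), (by simp only [hF3, mem_filter] at hp; have := p.1.isLt; omega)⟩ : Fin s),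
        (⟨p.2, (by simp only [hF3, mem_filter] at hp; exact hp.2.2.1)⟩ : Fin t)))
      (j := fun q _ => ((⟨(q.1 : ℕ) + (m - s), (by have := q.1.isLt; omega)⟩ : Fin m),
        (⟨q.2, lt_of_lt_of_le q.2.isLt htn⟩ : Fin n)))
      ?_ ?_ ?_ ?_
    · intro p hp
      simp only [hF3, mem_filter] at hp
      simp only [cornerSW, mem_filter, mem_univ, true_and]
      intro i' j' h1 h2
      have h1' : (p.1 : ℕ) - (m - s) ≤ (i' : ℕ) := h1
      exact hp.2.2.2 i' j' (by omega) h2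
    · intro q hq
      simp only [cornerSW, mem_filter, mem_univ, true_and] at hq
      simp only [hF3, mem_filter, mem_univ, true_and]
      refine ⟨by omega, q.2.isLt, ?_⟩
      intro i' j' h1 h2
      exact hq i' j' (by have := q.1.isLt; omega) h2
    · intro p hp
      simp only [hF3, mem_filter] at hp
      exact Prod.ext (Fin.ext (by show (p.1 : ℕ) - (m - s) + (m - s) = (p.1 : ℕ); have := hp.2.1; omega)) (Fin.ext rfl)
    · intro q hq
      exact Prod.ext (Fin.ext (by show (q.1 : ℕ) + (m - s) - (m - s) = (q.1 : ℕ); omega)) (Fin.ext rfl)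
  have e4 : F4.card = (cornerSE Q).card := by
    refine Finset.card_bij' (i := fun p hp => ((⟨(p.1 : ℕ) - (m - s), (by simp only [hF4, mem_filter] at hp; have := p.1.isLt; omega)⟩ : Fin s),
        (⟨(p.2 : ℕ) - (n - t), (by simp only [hF4, mem_filter] at hp; have := p.2.isLt; omega)⟩ : Fin t)))
      (j := fun q _ => ((⟨(q.1 : ℕ) + (m - s), (by have := q.1.isLt; omega)⟩ : Fin m),
        (⟨(q.2 : ℕ) + (n - t), (by have := q.2.isLt; omega)⟩ : Fin n)))
      ?_ ?_ ?_ ?_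
    · intro p hp
      simp only [hF4, mem_filter] at hp
      simp only [cornerSE, mem_filter, mem_univ, true_and]
      intro i' j' h1 h2
      have h1' : (p.1 : ℕ) - (m - s) ≤ (i' : ℕ) := h1
      have h2' : (p.2 : ℕ) - (n - t) ≤ (j' : ℕ) := h2
      exact hp.2.2.2 i' j' (by omega) (by omega)
    · intro q hq
      simp only [cornerSE, mem_filter, mem_univ, true_and] at hq
      simp only [hF4, mem_filter, mem_univ, true_and]
      refine ⟨by omega, by omega, ?_⟩
      intro i' j' h1 h2
      exact hq i' j' (by have := q.1.isLt; omega) (by have := q.2.isLt; omega)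
    · intro p hp
      simp only [hF4, mem_filter] at hp
      exact Prod.ext (Fin.ext (by show (p.1 : ℕ) - (m - s) + (m - s) = (p.1 : ℕ); have := hp.2.1; omega)) (Fin.ext (by show (p.2 : ℕ) - (n - t) + (n - t) = (p.2 : ℕ); have := hp.2.2.1; omega))
    · intro q hq
      exact Prod.ext (Fin.ext (by show (q.1 : ℕ) + (m - s) - (m - s) = (q.1 : ℕ); omega)) (Fin.ext (by show (q.2 : ℕ) + (n - t) - (n - t) = (q.2 : ℕ); omega))
  unfold zerosCount
  rw [hZ, card_union_of_disjoint d4, card_union_of_disjoint d3, card_union_of_disjoint d12,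
    e1, e2, e3, e4]
  omega

set_option maxHeartbeats 2000000 in
lemma zeros_le {m n s t : ℕ} (hm : 2 * s ≤ m) (hn : 2 * t ≤ n)
    (Q : Fin s → Fin t → Bool)
    (hrow1 : ∃ (i : Fin s) (j : Fin t), (i : ℕ) = 0 ∧ Q i j = true)
    (hrowlast : ∃ (i : Fin s) (j : Fin t), (i : ℕ) = s - 1 ∧ Q i j = true)
    (hcol1 : ∃ (i : Fin s) (j : Fin t), (j : ℕ) = 0 ∧ Q i j = true)
    (hcollast : ∃ (i : Fin s) (j : Fin t), (j : ℕ) = t - 1 ∧ Q i j = true)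
    (A : Fin m → Fin n → Bool) (hA : IsForcing A Q) :
    zerosCount A ≤
      (cornerNW Q).card + (cornerSW Q).card + (cornerNE Q).card + (cornerSE Q).card := by
  classical
  obtain ⟨ir1, jr1, hir1, hQr1⟩ := hrow1
  obtain ⟨irl, jrl, hirl, hQrl⟩ := hrowlast
  obtain ⟨ic1, jc1, hjc1, hQc1⟩ := hcol1
  obtain ⟨icl, jcl, hjcl, hQcl⟩ := hcollast
  have hs : 0 < s := ir1.pos
  have ht : 0 < t := jr1.pos
  have hsm : s ≤ m := by omega
  have htn : t ≤ n := by omega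
  -- classification of rows of zero entries
  have c1 : ∀ (i : Fin m) (j : Fin n), A i j = false → ((i : ℕ) < s ∨ m - s ≤ (i : ℕ)) := by
    intro i j h0
    by_contra hcon
    push_neg at hcon
    obtain ⟨hi1, hi2⟩ := hcon
    rcases lt_or_ge (j : ℕ) (n - t) with hj | hj
    · exact forcing_zero hsm htn hA h0 ic1 jc1 hQc1
        (by have := ic1.isLt; omega) (by have := ic1.isLt; omega)
        (by omega) (by omega)
    · exact forcing_zero hsm htn hA h0 icl jcl hQcl
        (by have := icl.isLt; omega) (by have := icl.isLt; omega)
        (by have := jcl.isLt; omega) (by have := j.isLt; omega)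
  have c2 : ∀ (i : Fin m) (j : Fin n), A i j = false → ((j : ℕ) < t ∨ n - t ≤ (j : ℕ)) := by
    intro i j h0
    by_contra hcon
    push_neg at hcon
    obtain ⟨hj1, hj2⟩ := hcon
    rcases lt_or_ge (i : ℕ) (m - s) with hi | hi
    · exact forcing_zero hsm htn hA h0 ir1 jr1 hQr1
        (by omega) (by omega)
        (by have := jr1.isLt; omega) (by have := jr1.isLt; omega)
    · exact forcing_zero hsm htn hA h0 irl jrl hQrl
        (by omega) (by have := i.isLt; omega)
        (by have := jrl.isLt; omega) (by have := jrl.isLt; omega)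
  -- corner membership lemmas
  have hNW : ∀ (i : Fin m) (j : Fin n) (hi : (i : ℕ) < s) (hj : (j : ℕ) < t),
      A i j = false → ((⟨i, hi⟩ : Fin s), (⟨j, hj⟩ : Fin t)) ∈ cornerNW Q := by
    intro i j hi hj h0
    simp only [cornerNW, mem_filter, mem_univ, true_and]
    intro i' j' h1 h2
    by_contra hq
    rw [Bool.not_eq_false] at hq
    have h1' : (i' : ℕ) ≤ (i : ℕ) := h1
    have h2' : (j' : ℕ) ≤ (j : ℕ) := h2
    exact forcing_zero hsm htn hA h0 i' j' hq h1' (by have := i'.isLt; omega)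
      h2' (by have := j'.isLt; omega)
  have hNE : ∀ (i : Fin m) (j : Fin n) (hi : (i : ℕ) < s) (hj : n - t ≤ (j : ℕ)),
      A i j = false → ((⟨i, hi⟩ : Fin s), (⟨(j : ℕ) - (n - t), by have := j.isLt; omega⟩ : Fin t)) ∈ cornerNE Q := by
    intro i j hi hj h0
    simp only [cornerNE, mem_filter, mem_univ, true_and]
    intro i' j' h1 h2
    by_contra hq
    rw [Bool.not_eq_false] at hq
    have h1' : (i' : ℕ) ≤ (i : ℕ) := h1
    have h2' : (j : ℕ) - (n - t) ≤ (j' : ℕ) := h2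
    exact forcing_zero hsm htn hA h0 i' j' hq h1' (by have := i'.isLt; omega)
      (by have := j'.isLt; omega) (by omega)
  have hSW : ∀ (i : Fin m) (j : Fin n) (hi : m - s ≤ (i : ℕ)) (hj : (j : ℕ) < t),
      A i j = false → ((⟨(i : ℕ) - (m - s), by have := i.isLt; omega⟩ : Fin s), (⟨j, hj⟩ : Fin t)) ∈ cornerSW Q := by
    intro i j hi hj h0
    simp only [cornerSW, mem_filter, mem_univ, true_and]
    intro i' j' h1 h2
    by_contra hq
    rw [Bool.not_eq_false] at hq
    have h1' : (i : ℕ) - (m - s) ≤ (i' : ℕ) := h1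
    have h2' : (j' : ℕ) ≤ (j : ℕ) := h2
    exact forcing_zero hsm htn hA h0 i' j' hq (by have := i'.isLt; omega) (by omega)
      h2' (by have := j'.isLt; omega)
  have hSE : ∀ (i : Fin m) (j : Fin n) (hi : m - s ≤ (i : ℕ)) (hj : n - t ≤ (j : ℕ)),
      A i j = false → ((⟨(i : ℕ) - (m - s), by have := i.isLt; omega⟩ : Fin s),
        (⟨(j : ℕ) - (n - t), by have := j.isLt; omega⟩ : Fin t)) ∈ cornerSE Q := by
    intro i j hi hj h0
    simp only [cornerSE, mem_filter, mem_univ, true_and]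
    intro i' j' h1 h2
    by_contra hq
    rw [Bool.not_eq_false] at hq
    have h1' : (i : ℕ) - (m - s) ≤ (i' : ℕ) := h1
    have h2' : (j : ℕ) - (n - t) ≤ (j' : ℕ) := h2
    exact forcing_zero hsm htn hA h0 i' j' hq (by have := i'.isLt; omega) (by omega)
      (by have := j'.isLt; omega) (by omega)
  -- counting
  set Z : Finset (Fin m × Fin n) := univ.filter (fun p => A p.1 p.2 = false) with hZdef
  have hzc : zerosCount A = Z.card := rfl
  set Z1 := Z.filter (fun p => (p.1 : ℕ) < s ∧ (p.2 : ℕ) < t) with hZ1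
  set Z2 := Z.filter (fun p => (p.1 : ℕ) < s ∧ n - t ≤ (p.2 : ℕ)) with hZ2
  set Z3 := Z.filter (fun p => m - s ≤ (p.1 : ℕ) ∧ (p.2 : ℕ) < t) with hZ3
  set Z4 := Z.filter (fun p => m - s ≤ (p.1 : ℕ) ∧ n - t ≤ (p.2 : ℕ)) with hZ4
  have hcover : Z ⊆ ((Z1 ∪ Z2) ∪ Z3) ∪ Z4 := by
    intro p hp
    have h0 : A p.1 p.2 = false := by
      rw [hZdef] at hp; exact (mem_filter.mp hp).2
    have hc1 := c1 p.1 p.2 h0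
    have hc2 := c2 p.1 p.2 h0
    simp only [hZ1, hZ2, hZ3, hZ4, mem_union, mem_filter]
    rcases hc1 with h | h <;> rcases hc2 with h' | h' <;> tauto
  have hb1 : Z1.card ≤ (cornerNW Q).card := by
    apply Finset.card_le_card_of_injOn
      (f := fun p => ((⟨(p.1 : ℕ) % s, Nat.mod_lt _ hs⟩ : Fin s), (⟨(p.2 : ℕ) % t, Nat.mod_lt _ ht⟩ : Fin t)))
    · intro p hp
      simp only [hZ1, hZdef, mem_filter, mem_coe] at hp
      obtain ⟨⟨-, h0⟩, hp1, hp2⟩ := hp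
      have e1 : (⟨(p.1 : ℕ) % s, Nat.mod_lt _ hs⟩ : Fin s) = ⟨p.1, hp1⟩ :=
        Fin.ext (Nat.mod_eq_of_lt hp1)
      have e2 : (⟨(p.2 : ℕ) % t, Nat.mod_lt _ ht⟩ : Fin t) = ⟨p.2, hp2⟩ :=
        Fin.ext (Nat.mod_eq_of_lt hp2)
      simp only [mem_coe]; rw [e1, e2]
      exact hNW p.1 p.2 hp1 hp2 h0
    · intro p hp q hq hpq
      simp only [hZ1, hZdef, mem_filter, mem_coe] at hp hq
      simp only [Prod.mk.injEq, Fin.mk.injEq] at hpq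
      obtain ⟨f1, f2⟩ := hpq
      rw [Nat.mod_eq_of_lt hp.2.1, Nat.mod_eq_of_lt hq.2.1] at f1
      rw [Nat.mod_eq_of_lt hp.2.2, Nat.mod_eq_of_lt hq.2.2] at f2
      exact Prod.ext (Fin.ext f1) (Fin.ext f2)
  have hb2 : Z2.card ≤ (cornerNE Q).card := by
    apply Finset.card_le_card_of_injOn
      (f := fun p => ((⟨(p.1 : ℕ) % s, Nat.mod_lt _ hs⟩ : Fin s),
        (⟨((p.2 : ℕ) - (n - t)) % t, Nat.mod_lt _ ht⟩ : Fin t)))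
    · intro p hp
      simp only [hZ2, hZdef, mem_filter, mem_coe] at hp
      obtain ⟨⟨-, h0⟩, hp1, hp2⟩ := hp
      have hlt : (p.2 : ℕ) - (n - t) < t := by have := p.2.isLt; omega
      have e1 : (⟨(p.1 : ℕ) % s, Nat.mod_lt _ hs⟩ : Fin s) = ⟨p.1, hp1⟩ :=
        Fin.ext (Nat.mod_eq_of_lt hp1)
      have e2 : (⟨((p.2 : ℕ) - (n - t)) % t, Nat.mod_lt _ ht⟩ : Fin t) = ⟨(p.2 : ℕ) - (n - t), hlt⟩ :=
        Fin.ext (Nat.mod_eq_of_lt hlt)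
      simp only [mem_coe]; rw [e1, e2]
      exact hNE p.1 p.2 hp1 hp2 h0
    · intro p hp q hq hpq
      simp only [hZ2, hZdef, mem_filter, mem_coe] at hp hq
      simp only [Prod.mk.injEq, Fin.mk.injEq] at hpq
      obtain ⟨f1, f2⟩ := hpq
      have hltp : (p.2 : ℕ) - (n - t) < t := by have := p.2.isLt; omega
      have hltq : (q.2 : ℕ) - (n - t) < t := by have := q.2.isLt; omega
      rw [Nat.mod_eq_of_lt hp.2.1, Nat.mod_eq_of_lt hq.2.1] at f1
      rw [Nat.mod_eq_of_lt hltp, Nat.mod_eq_of_lt hltq] at f2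
      refine Prod.ext (Fin.ext f1) (Fin.ext ?_)
      have := hp.2.2; have := hq.2.2; omega
  have hb3 : Z3.card ≤ (cornerSW Q).card := by
    apply Finset.card_le_card_of_injOn
      (f := fun p => ((⟨((p.1 : ℕ) - (m - s)) % s, Nat.mod_lt _ hs⟩ : Fin s),
        (⟨(p.2 : ℕ) % t, Nat.mod_lt _ ht⟩ : Fin t)))
    · intro p hp
      simp only [hZ3, hZdef, mem_filter, mem_coe] at hp
      obtain ⟨⟨-, h0⟩, hp1, hp2⟩ := hp
      have hlt : (p.1 : ℕ) - (m - s) < s := by have := p.1.isLt; omega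
      have e1 : (⟨((p.1 : ℕ) - (m - s)) % s, Nat.mod_lt _ hs⟩ : Fin s) = ⟨(p.1 : ℕ) - (m - s), hlt⟩ :=
        Fin.ext (Nat.mod_eq_of_lt hlt)
      have e2 : (⟨(p.2 : ℕ) % t, Nat.mod_lt _ ht⟩ : Fin t) = ⟨p.2, hp2⟩ :=
        Fin.ext (Nat.mod_eq_of_lt hp2)
      simp only [mem_coe]; rw [e1, e2]
      exact hSW p.1 p.2 hp1 hp2 h0
    · intro p hp q hq hpq
      simp only [hZ3, hZdef, mem_filter, mem_coe] at hp hq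
      simp only [Prod.mk.injEq, Fin.mk.injEq] at hpq
      obtain ⟨f1, f2⟩ := hpq
      have hltp : (p.1 : ℕ) - (m - s) < s := by have := p.1.isLt; omega
      have hltq : (q.1 : ℕ) - (m - s) < s := by have := q.1.isLt; omega
      rw [Nat.mod_eq_of_lt hltp, Nat.mod_eq_of_lt hltq] at f1
      rw [Nat.mod_eq_of_lt hp.2.2, Nat.mod_eq_of_lt hq.2.2] at f2
      refine Prod.ext (Fin.ext ?_) (Fin.ext f2)
      have := hp.2.1; have := hq.2.1; omega
  have hb4 : Z4.card ≤ (cornerSE Q).card := by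
    apply Finset.card_le_card_of_injOn
      (f := fun p => ((⟨((p.1 : ℕ) - (m - s)) % s, Nat.mod_lt _ hs⟩ : Fin s),
        (⟨((p.2 : ℕ) - (n - t)) % t, Nat.mod_lt _ ht⟩ : Fin t)))
    · intro p hp
      simp only [hZ4, hZdef, mem_filter, mem_coe] at hp
      obtain ⟨⟨-, h0⟩, hp1, hp2⟩ := hp
      have hlt1 : (p.1 : ℕ) - (m - s) < s := by have := p.1.isLt; omega
      have hlt2 : (p.2 : ℕ) - (n - t) < t := by have := p.2.isLt; omega
      have e1 : (⟨((p.1 : ℕ) - (m - s)) % s, Nat.mod_lt _ hs⟩ : Fin s) = ⟨(p.1 : ℕ) - (m - s), hlt1⟩ :=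
        Fin.ext (Nat.mod_eq_of_lt hlt1)
      have e2 : (⟨((p.2 : ℕ) - (n - t)) % t, Nat.mod_lt _ ht⟩ : Fin t) = ⟨(p.2 : ℕ) - (n - t), hlt2⟩ :=
        Fin.ext (Nat.mod_eq_of_lt hlt2)
      simp only [mem_coe]; rw [e1, e2]
      exact hSE p.1 p.2 hp1 hp2 h0
    · intro p hp q hq hpq
      simp only [hZ4, hZdef, mem_filter, mem_coe] at hp hq
      simp only [Prod.mk.injEq, Fin.mk.injEq] at hpq
      obtain ⟨f1, f2⟩ := hpq
      have hltp1 : (p.1 : ℕ) - (m - s) < s := by have := p.1.isLt; omega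
      have hltq1 : (q.1 : ℕ) - (m - s) < s := by have := q.1.isLt; omega
      have hltp2 : (p.2 : ℕ) - (n - t) < t := by have := p.2.isLt; omega
      have hltq2 : (q.2 : ℕ) - (n - t) < t := by have := q.2.isLt; omega
      rw [Nat.mod_eq_of_lt hltp1, Nat.mod_eq_of_lt hltq1] at f1
      rw [Nat.mod_eq_of_lt hltp2, Nat.mod_eq_of_lt hltq2] at f2
      refine Prod.ext (Fin.ext ?_) (Fin.ext ?_)
      · have := hp.2.1; have := hq.2.1; omega
      · have := hp.2.2; have := hq.2.2; omega
  have hle : Z.card ≤ Z1.card + Z2.card + Z3.card + Z4.card := by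
    calc Z.card ≤ (((Z1 ∪ Z2) ∪ Z3) ∪ Z4).card := card_le_card hcover
    _ ≤ ((Z1 ∪ Z2) ∪ Z3).card + Z4.card := card_union_le _ _
    _ ≤ ((Z1 ∪ Z2).card + Z3.card) + Z4.card := by
        have := card_union_le (Z1 ∪ Z2) Z3; omega
    _ ≤ Z1.card + Z2.card + Z3.card + Z4.card := by
        have := card_union_le Z1 Z2; omega
  rw [hzc]
  omega

theorem stmt6 (m n s t : ℕ) (hm : 2 * s ≤ m) (hn : 2 * t ≤ n)
    (Q : Fin s → Fin t → Bool)
    (hrow1 : ∃ (i : Fin s) (j : Fin t), (i : ℕ) = 0 ∧ Q i j = true)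
    (hrowlast : ∃ (i : Fin s) (j : Fin t), (i : ℕ) = s - 1 ∧ Q i j = true)
    (hcol1 : ∃ (i : Fin s) (j : Fin t), (j : ℕ) = 0 ∧ Q i j = true)
    (hcollast : ∃ (i : Fin s) (j : Fin t), (j : ℕ) = t - 1 ∧ Q i j = true) :
    mMin m n Q =
      m * n - ((cornerNW Q).card + (cornerSW Q).card + (cornerNE Q).card + (cornerSE Q).card) := by
  set K := (cornerNW Q).card + (cornerSW Q).card + (cornerNE Q).card + (cornerSE Q).card with hK
  have hforce := buildA_forcing m n s t Q
  have hzeros := buildA_zeros m n s t hm hn Q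
  have hadd := ones_add_zeros (buildA m n s t Q)
  have hones : onesCount (buildA m n s t Q) = m * n - K := by omega
  have hmem : (m * n - K) ∈ {v | ∃ A : Fin m → Fin n → Bool, IsForcing A Q ∧ onesCount A = v} :=
    ⟨buildA m n s t Q, hforce, hones⟩
  apply le_antisymm
  · exact Nat.sInf_le hmem
  · apply le_csInf ⟨_, hmem⟩
    rintro v ⟨A, hA, rfl⟩
    have h1 := ones_add_zeros A
    have h2 := zeros_le hm hn Q hrow1 hrowlast hcol1 hcollast A hA
    omega
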